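/- arXiv:1705.06551 — 3 statements merged into one kernel-verified Lean document; each statement's English description precedes it below -/
import Mathlib

section
/- Let G : ℝⁿ → S^m be continuously differentiable and let r(x) := (1/2)‖P(−G(x))‖_F² be the feasibility residual. For any x ∈ ℝⁿ, Λ ∈ S^m and c > 0, setting Y_c(x,Λ) := P(Λ/c − G(x)) − Λ/c, one has r(x) ≤ (1/2)‖Y_c(x,Λ)‖_F². -/
open Matrix

attribute [local instance] Matrix.frobeniusSeminormedAddCommGroup
  Matrix.frobeniusNormedAddCommGroup Matrix.frobeniusNormedSpace

/-- The Jordan product `Y ∘ Z = (YZ + ZY)/2`. -/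
noncomputable def jmul {m : ℕ} (Y Z : Matrix (Fin m) (Fin m) ℝ) : Matrix (Fin m) (Fin m) ℝ :=
  (2⁻¹ : ℝ) • (Y * Z + Z * Y)

/-- The trace inner product `⟨Y, Z⟩ = tr (Y Z)`. -/
noncomputable def finner {m : ℕ} (Y Z : Matrix (Fin m) (Fin m) ℝ) : ℝ := (Y * Z).trace

/-- `P` is the nearest-point (Frobenius-norm) projection onto the cone of positive
semidefinite matrices, viewed on the space of real symmetric matrices. -/
def IsProjPSD {m : ℕ} (P : Matrix (Fin m) (Fin m) ℝ → Matrix (Fin m) (Fin m) ℝ) : Prop :=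
  ∀ Z : Matrix (Fin m) (Fin m) ℝ, Z.IsSymm →
    (P Z).PosSemidef ∧ ∀ W : Matrix (Fin m) (Fin m) ℝ, W.PosSemidef → ‖Z - P Z‖ ≤ ‖Z - W‖

noncomputable def ip {m : ℕ} (A B : Matrix (Fin m) (Fin m) ℝ) : ℝ :=
  ∑ i, ∑ j, A i j * B i j

lemma ip_norm_sq {m : ℕ} (A : Matrix (Fin m) (Fin m) ℝ) : ‖A‖ ^ 2 = ip A A := by
  rw [frobenius_norm_def, ← Real.rpow_natCast _ 2, ← Real.rpow_mul (by positivity)]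
  norm_num
  rw [ip]
  congr 1; ext i; congr 1; ext j
  ring

lemma ip_comm {m : ℕ} (A B : Matrix (Fin m) (Fin m) ℝ) : ip A B = ip B A := by
  unfold ip; congr 1; ext i; congr 1; ext j; ring

lemma ip_expand_sub {m : ℕ} (A B : Matrix (Fin m) (Fin m) ℝ) :
    ‖A - B‖ ^ 2 = ‖A‖ ^ 2 - 2 * ip A B + ‖B‖ ^ 2 := by
  simp only [ip_norm_sq, ip, Matrix.sub_apply, Finset.mul_sum, ← Finset.sum_sub_distrib,
    ← Finset.sum_add_distrib]
  congr 1; ext i; congr 1; ext j; ring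

lemma psd_smul {m : ℕ} {a : ℝ} (ha : 0 ≤ a) {A : Matrix (Fin m) (Fin m) ℝ}
    (hA : A.PosSemidef) : (a • A).PosSemidef := by
  refine PosSemidef.of_dotProduct_mulVec_nonneg ?_ fun x => ?_
  · unfold Matrix.IsHermitian
    rw [conjTranspose_smul, hA.1]
    simp
  · rw [smul_mulVec, dotProduct_smul, smul_eq_mul]
    exact mul_nonneg ha (hA.dotProduct_mulVec_nonneg x)

/-- the rank-one matrix vvᵀ -/
def vv {m : ℕ} (v : Fin m → ℝ) : Matrix (Fin m) (Fin m) ℝ :=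
  Matrix.of fun i j => v i * v j

lemma psd_vv {m : ℕ} (v : Fin m → ℝ) : (vv v).PosSemidef := by
  refine PosSemidef.of_dotProduct_mulVec_nonneg ?_ fun x => ?_
  · ext i j; simp [vv, conjTranspose_apply, mul_comm]
  · have : dotProduct (star x) (vv v *ᵥ x) = (∑ i, v i * x i) * (∑ j, v j * x j) := by
      simp only [dotProduct, mulVec, vv, star_trivial, Finset.sum_mul, Finset.mul_sum,
        Matrix.of_apply]
      congr 1; ext i; congr 1; ext j; ring
    rw [this]
    exact mul_self_nonneg _

lemma ip_eq_trace {m : ℕ} {A B : Matrix (Fin m) (Fin m) ℝ} (hB : Bᴴ = B) :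
    ip A B = (A * B).trace := by
  unfold ip
  rw [Matrix.trace]
  simp only [diag_apply, mul_apply]
  congr 1; ext i; congr 1; ext j
  have : B j i = B i j := by
    conv_lhs => rw [← hB]
    simp [conjTranspose_apply]
  rw [this]

open scoped MatrixOrder in
lemma psd_eq_ct {m : ℕ} {A : Matrix (Fin m) (Fin m) ℝ} (hA : A.PosSemidef) :
    ∃ C : Matrix (Fin m) (Fin m) ℝ, A = Cᴴ * C := by
  obtain ⟨B, rfl⟩ := CStarAlgebra.nonneg_iff_eq_star_mul_self.mp hA.nonneg
  exact ⟨B, rfl⟩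

lemma trace_psd_mul_nonneg {m : ℕ} {A B : Matrix (Fin m) (Fin m) ℝ}
    (hA : A.PosSemidef) (hB : B.PosSemidef) : 0 ≤ (A * B).trace := by
  obtain ⟨C, rfl⟩ := psd_eq_ct hA
  obtain ⟨D, rfl⟩ := psd_eq_ct hB
  have h1 : (Cᴴ * C * (Dᴴ * D)).trace = ((D * Cᴴ)ᴴ * (D * Cᴴ)).trace := by
    rw [conjTranspose_mul, conjTranspose_conjTranspose]
    rw [show Cᴴ * C * (Dᴴ * D) = Cᴴ * (C * (Dᴴ * D)) by noncomm_ring]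
    rw [trace_mul_comm]
    noncomm_ring
  rw [h1]
  set M := D * Cᴴ
  rw [Matrix.trace]
  refine Finset.sum_nonneg fun i _ => ?_
  simp only [diag_apply, mul_apply, conjTranspose_apply, star_trivial]
  exact Finset.sum_nonneg fun j _ => mul_self_nonneg _

lemma ip_psd_nonneg {m : ℕ} {A B : Matrix (Fin m) (Fin m) ℝ}
    (hA : A.PosSemidef) (hB : B.PosSemidef) : 0 ≤ ip A B := by
  rw [ip_eq_trace hB.1]
  exact trace_psd_mul_nonneg hA hB

lemma ip_smul_right {m : ℕ} (A B : Matrix (Fin m) (Fin m) ℝ) (t : ℝ) :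
    ip A (t • B) = t * ip A B := by
  simp only [ip, Matrix.smul_apply, smul_eq_mul, Finset.mul_sum]
  congr 1; ext i; congr 1; ext j; ring

lemma varineq {m : ℕ} {P : Matrix (Fin m) (Fin m) ℝ → Matrix (Fin m) (Fin m) ℝ}
    (hP : IsProjPSD P) {Z W : Matrix (Fin m) (Fin m) ℝ} (hZ : Z.IsSymm)
    (hW : W.PosSemidef) : ip (Z - P Z) (W - P Z) ≤ 0 := by
  obtain ⟨hQ, hmin⟩ := hP Z hZ
  set Q := P Z with hQdef
  set D := W - Q with hD
  set I := ip (Z - Q) D with hI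
  have key : ∀ t : ℝ, 0 < t → t ≤ 1 → 2 * t * I ≤ t ^ 2 * ‖D‖ ^ 2 := by
    intro t ht ht1
    have hWt : (Q + t • D).PosSemidef := by
      have e : Q + t • D = (1 - t) • Q + t • W := by
        ext i j
        simp only [Matrix.add_apply, Matrix.smul_apply, Matrix.sub_apply, smul_eq_mul, hD]
        ring
      rw [e]
      exact ((psd_smul (by linarith) hQ).add (psd_smul ht.le hW))
    have h := hmin _ hWt
    have h2 : ‖Z - Q‖ ^ 2 ≤ ‖Z - (Q + t • D)‖ ^ 2 :=
      pow_le_pow_left₀ (norm_nonneg _) h 2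
    have h3 : Z - (Q + t • D) = (Z - Q) - t • D := by abel
    rw [h3, ip_expand_sub (Z - Q) (t • D), ip_smul_right] at h2
    have h5 : ‖t • D‖ ^ 2 = t ^ 2 * ‖D‖ ^ 2 := by
      rw [norm_smul, mul_pow, Real.norm_eq_abs, sq_abs]
    rw [h5] at h2
    linarith
  by_contra hc
  push_neg at hc
  set t := min 1 (I / (‖D‖ ^ 2 + 1)) with htdef
  have ht : 0 < t := lt_min one_pos (div_pos hc (by positivity))
  have hk := key t ht (min_le_left _ _)
  have htI : t * (‖D‖ ^ 2 + 1) ≤ I := by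
    rw [← le_div_iff₀ (by positivity)]
    exact min_le_right _ _
  nlinarith [mul_pos ht hc, mul_le_mul_of_nonneg_left htI ht.le, sq_nonneg t]

lemma orth {m : ℕ} {P : Matrix (Fin m) (Fin m) ℝ → Matrix (Fin m) (Fin m) ℝ}
    (hP : IsProjPSD P) {Z : Matrix (Fin m) (Fin m) ℝ} (hZ : Z.IsSymm) :
    ip (Z - P Z) (P Z) = 0 := by
  have hQ := (hP Z hZ).1
  have h1 := varineq hP hZ (Matrix.PosSemidef.zero (n := Fin m) (R := ℝ))
  have h2 := varineq hP hZ (psd_smul (by norm_num : (0:ℝ) ≤ 2) hQ)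
  have e1 : (0 : Matrix (Fin m) (Fin m) ℝ) - P Z = (-1 : ℝ) • P Z := by
    ext i j; simp
  have e2 : (2:ℝ) • P Z - P Z = P Z := by
    ext i j; simp [Matrix.smul_apply]; ring
  rw [e1, ip_smul_right] at h1
  rw [e2] at h2
  linarith

lemma psd_sub {m : ℕ} {P : Matrix (Fin m) (Fin m) ℝ → Matrix (Fin m) (Fin m) ℝ}
    (hP : IsProjPSD P) {Z : Matrix (Fin m) (Fin m) ℝ} (hZ : Z.IsSymm) :
    (P Z - Z).PosSemidef := by
  have hQ := (hP Z hZ).1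
  refine PosSemidef.of_dotProduct_mulVec_nonneg ?_ fun v => ?_
  · have hZh : Zᴴ = Z := by
      ext i j
      simp only [conjTranspose_apply, star_trivial]
      exact congrFun (congrFun hZ i) j
    unfold Matrix.IsHermitian
    rw [conjTranspose_sub, hQ.1, hZh]
  · have h := varineq hP hZ (hQ.add (psd_vv v))
    have e : P Z + vv v - P Z = vv v := by abel
    rw [e] at h
    have e2 : ip (Z - P Z) (vv v) = dotProduct (star v) ((Z - P Z) *ᵥ v) := by
      simp only [ip, dotProduct, mulVec, vv, star_trivial, Matrix.of_apply, Finset.mul_sum]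
      congr 1; ext i; congr 1; ext j; ring
    have e3 : P Z - Z = -(Z - P Z) := by abel
    rw [e3, neg_mulVec, dotProduct_neg, ← e2]
    linarith

lemma ip_sub_left {m : ℕ} (A B C : Matrix (Fin m) (Fin m) ℝ) :
    ip (A - B) C = ip A C - ip B C := by
  simp only [ip, Matrix.sub_apply, ← Finset.sum_sub_distrib]
  congr 1; ext i; congr 1; ext j; ring

lemma ip_neg_left {m : ℕ} (A C : Matrix (Fin m) (Fin m) ℝ) : ip (-A) C = - ip A C := by
  simp only [ip, Matrix.neg_apply, ← Finset.sum_neg_distrib]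
  congr 1; ext i; congr 1; ext j; ring

lemma key_sq {m : ℕ} {P : Matrix (Fin m) (Fin m) ℝ → Matrix (Fin m) (Fin m) ℝ}
    (hP : IsProjPSD P) {Z W : Matrix (Fin m) (Fin m) ℝ} (hZ : Z.IsSymm)
    (hW : W.PosSemidef) : ‖P (-Z)‖ ^ 2 ≤ ‖W - Z‖ ^ 2 := by
  have hnZ : (-Z).IsSymm := by rw [Matrix.IsSymm, transpose_neg, hZ]
  set Q := P (-Z) with hQdef
  have hQ := (hP (-Z) hnZ).1
  have ho := orth hP hnZ
  rw [← hQdef, ip_sub_left, ip_neg_left] at ho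
  have h2 : 0 ≤ ip W Q := ip_psd_nonneg hW hQ
  have h3 : ‖Q‖ ^ 2 ≤ ip (W - Z) Q := by
    rw [ip_norm_sq, ip_sub_left]
    linarith
  have h4 : (0:ℝ) ≤ ‖(W - Z) - Q‖ ^ 2 := by positivity
  rw [ip_expand_sub] at h4
  rw [ip_norm_sq Q] at h4
  rw [ip_norm_sq] at h3 ⊢
  linarith

/-- `r(x) ≤ (1/2)‖Y_c(x,Λ)‖_F²` where `r(x) = (1/2)‖P(-G(x))‖_F²` and
`Y_c(x,Λ) = P(Λ/c - G(x)) - Λ/c`. -/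
theorem residual_le_Yc {n m : ℕ}
    (P : Matrix (Fin m) (Fin m) ℝ → Matrix (Fin m) (Fin m) ℝ) (hP : IsProjPSD P)
    (G : (Fin n → ℝ) → Matrix (Fin m) (Fin m) ℝ) (hGsymm : ∀ x, (G x).IsSymm)
    (hG : ContDiff ℝ 1 G)
    (x : Fin n → ℝ) (Λ : Matrix (Fin m) (Fin m) ℝ) (hΛ : Λ.IsSymm) (c : ℝ) (hc : 0 < c) :
    (1 / 2) * ‖P (-(G x))‖ ^ 2 ≤ (1 / 2) * ‖P (c⁻¹ • Λ - G x) - c⁻¹ • Λ‖ ^ 2 := by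
  have hBsymm : (c⁻¹ • Λ - G x).IsSymm := by
    rw [Matrix.IsSymm, transpose_sub, transpose_smul, hΛ, hGsymm x]
  have hW := psd_sub hP hBsymm
  have h := key_sq hP (hGsymm x) hW
  have e : P (c⁻¹ • Λ - G x) - (c⁻¹ • Λ - G x) - G x = P (c⁻¹ • Λ - G x) - c⁻¹ • Λ := by
    abel
  rw [e] at h
  linarith
end

section
/- Let Y be an m×m symmetric positive semidefinite matrix with unit diagonal (Y_ii = 1 for all i). Then diag(lin T_{S^m_+}(Y)) = ℝ^m, i.e., the image under the diagonal map of the lineality space of the tangent cone of the PSD cone at Y is all of ℝ^m. -/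
open Matrix
open Filter

attribute [local instance] Matrix.frobeniusSeminormedAddCommGroup
  Matrix.frobeniusNormedAddCommGroup Matrix.frobeniusNormedSpace

-- scalar limit lemma
lemma scalar_lim (a : ℝ) :
    Tendsto (fun n : ℕ => ((n : ℝ) + 1) * (Real.exp ((1 / ((n : ℝ) + 1)) * a) - 1))
      atTop (nhds a) := by
  have hderiv : HasDerivAt (fun s : ℝ => Real.exp (s * a)) a 0 := by
    simpa using (hasDerivAt_mul_const (x := (0:ℝ)) a).exp
  have hslope := hasDerivAt_iff_tendsto_slope.mp hderiv
  have hs : Tendsto (fun n : ℕ => 1 / ((n : ℝ) + 1)) atTop (nhdsWithin 0 {(0:ℝ)}ᶜ) := by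
    apply tendsto_nhdsWithin_of_tendsto_nhds_of_eventually_within
    · exact tendsto_one_div_add_atTop_nhds_zero_nat
    · filter_upwards with n
      have : (0:ℝ) < 1 / ((n : ℝ) + 1) := by positivity
      exact ne_of_gt this
  have := hslope.comp hs
  refine this.congr fun n => ?_
  have hne : ((n : ℝ) + 1) ≠ 0 := by positivity
  simp only [Function.comp, slope_def_field, div_sub_div_same, zero_mul, Real.exp_zero,
    sub_zero]
  rw [div_div_eq_mul_div, div_one]
  ring

set_option maxHeartbeats 1000000 in
lemma key_mem {m : ℕ} (Y : Matrix (Fin m) (Fin m) ℝ) (hY : Y.PosSemidef) (v : Fin m → ℝ) :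
    (fun i j => (v i + v j) / 2 * Y i j : Matrix (Fin m) (Fin m) ℝ) ∈
      tangentConeAt ℝ {A : Matrix (Fin m) (Fin m) ℝ | A.PosSemidef} Y := by
  refine (mem_tangentConeAt_iff_exists_seq_norm_tendsto_atTop (E := Matrix (Fin m) (Fin m) ℝ)).mpr ?_
  refine ⟨fun n => (n : ℝ) + 1,
    fun n => Matrix.of (fun i j => Real.exp ((1 / ((n : ℝ) + 1)) * ((v i + v j) / 2)) * Y i j) - Y,
    ?_, ?_, ?_⟩
  swap
  · filter_upwards with n
    have hEq : Y + (Matrix.of (fun i j => Real.exp ((1 / ((n : ℝ) + 1)) * ((v i + v j) / 2)) * Y i j) - Y) =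
        (Matrix.diagonal fun i => Real.exp ((1 / ((n : ℝ) + 1)) * (v i / 2))) * Y *
          (Matrix.diagonal fun i => Real.exp ((1 / ((n : ℝ) + 1)) * (v i / 2)))ᴴ := by
      have hstar : (Matrix.diagonal fun i => Real.exp ((1 / ((n : ℝ) + 1)) * (v i / 2)))ᴴ =
          Matrix.diagonal fun i => Real.exp ((1 / ((n : ℝ) + 1)) * (v i / 2)) := by
        simp [Matrix.diagonal_conjTranspose]
      rw [hstar]
      ext i j
      rw [Matrix.mul_diagonal, Matrix.diagonal_mul]
      simp only [Matrix.add_apply, Matrix.sub_apply, Matrix.of_apply, add_sub_cancel]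
      rw [show (1 / ((n : ℝ) + 1)) * ((v i + v j) / 2) =
        1 / ((n : ℝ) + 1) * (v i / 2) + 1 / ((n : ℝ) + 1) * (v j / 2) by ring, Real.exp_add]
      ring
    rw [hEq]
    exact hY.mul_mul_conjTranspose_same _
  · simp only [Real.norm_eq_abs]
    exact tendsto_abs_atTop_atTop.comp
      (tendsto_atTop_add_const_right atTop (1 : ℝ) tendsto_natCast_atTop_atTop)
  · have hrepr : ∀ B : Matrix (Fin m) (Fin m) ℝ,
        B = ∑ i : Fin m, ∑ j : Fin m, (B i j) • Matrix.single i j (1 : ℝ) := by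
      intro B
      conv_lhs => rw [Matrix.matrix_eq_sum_single B]
      refine Finset.sum_congr rfl fun i _ => Finset.sum_congr rfl fun j _ => ?_
      rw [Matrix.smul_single, smul_eq_mul, mul_one]
    rw [hrepr (fun i j => (v i + v j) / 2 * Y i j : Matrix (Fin m) (Fin m) ℝ)]
    have : ∀ n : ℕ, (((n : ℝ) + 1) •
        (Matrix.of (fun i j => Real.exp ((1 / ((n : ℝ) + 1)) * ((v i + v j) / 2)) * Y i j) - Y)) =
        ∑ i : Fin m, ∑ j : Fin m,
          ((((n : ℝ) + 1) * ((Real.exp ((1 / ((n : ℝ) + 1)) * ((v i + v j) / 2))) - 1) * Y i j)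
            • Matrix.single i j (1 : ℝ)) := by
      intro n
      conv_lhs => rw [hrepr (((n : ℝ) + 1) • _)]
      refine Finset.sum_congr rfl fun i _ => Finset.sum_congr rfl fun j _ => ?_
      congr 1
      simp only [Matrix.smul_apply, Matrix.sub_apply, smul_eq_mul, Matrix.of_apply]
      ring
    simp only [this]
    refine tendsto_finset_sum _ fun i _ => tendsto_finset_sum _ fun j _ => ?_
    exact ((scalar_lim ((v i + v j) / 2)).mul_const (Y i j)).smul_const _

/-- For a PSD matrix `Y` with unit diagonal, the image under the diagonal map of the
lineality space of the tangent cone to the PSD cone at `Y` is all of `ℝ^m`. -/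
theorem diag_lineality_tangentCone_eq_univ {m : ℕ}
    (Y : Matrix (Fin m) (Fin m) ℝ) (hY : Y.PosSemidef) (hdiag : ∀ i, Y i i = 1) :
    (fun A : Matrix (Fin m) (Fin m) ℝ => (fun i => A i i : Fin m → ℝ)) ''
        (tangentConeAt ℝ {A : Matrix (Fin m) (Fin m) ℝ | A.PosSemidef} Y ∩
          {A | -A ∈ tangentConeAt ℝ {A : Matrix (Fin m) (Fin m) ℝ | A.PosSemidef} Y}) =
      Set.univ := by
  rw [Set.eq_univ_iff_forall]
  intro v
  refine ⟨(fun i j => (v i + v j) / 2 * Y i j : Matrix (Fin m) (Fin m) ℝ),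
    ⟨key_mem Y hY v, ?_⟩, ?_⟩
  · have hneg : -(fun i j => (v i + v j) / 2 * Y i j : Matrix (Fin m) (Fin m) ℝ) =
        (fun i j => ((-v) i + (-v) j) / 2 * Y i j : Matrix (Fin m) (Fin m) ℝ) := by
      ext i j
      simp only [Matrix.neg_apply, Pi.neg_apply]
      ring
    show -(fun i j => (v i + v j) / 2 * Y i j : Matrix (Fin m) (Fin m) ℝ) ∈
      tangentConeAt ℝ {A : Matrix (Fin m) (Fin m) ℝ | A.PosSemidef} Y
    rw [hneg]
    exact key_mem Y hY (-v)
  · funext i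
    simp only
    rw [hdiag i]
    ring
end

section
/- For the closest correlation matrix problem in standard NSDP form, with constraint map G(x) = I + Σ_{1≤i<j≤m} A^{ij} x_{ij} (where A^{ij} has 1 in entries (i,j) and (j,i) and 0 elsewhere), every feasible point x satisfies the nondegeneracy condition: S^m = lin T_{S^m_+}(G(x)) + Im ∇G(x). -/
open Matrix Pointwise Filter Topology

attribute [local instance] Matrix.frobeniusSeminormedAddCommGroup
  Matrix.frobeniusNormedAddCommGroup Matrix.frobeniusNormedSpace

/-- `A^{ij}`: the symmetric matrix with `1` in entries `(i,j)` and `(j,i)`, `0` elsewhere. -/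
def corA {m : ℕ} (p : {p : Fin m × Fin m // p.1 < p.2}) : Matrix (Fin m) (Fin m) ℝ :=
  Matrix.single p.1.1 p.1.2 1 + Matrix.single p.1.2 p.1.1 1

/-- The constraint map `G(x) = I + Σ_{i<j} A^{ij} x_{ij}` of the closest correlation matrix
problem in standard NSDP form. -/
noncomputable def corG {m : ℕ} (x : {p : Fin m × Fin m // p.1 < p.2} → ℝ) :
    Matrix (Fin m) (Fin m) ℝ :=
  1 + ∑ p, x p • corA p

namespace CorAux

variable {m : ℕ}

lemma stdBasis_transpose (i j : Fin m) (c : ℝ) :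
    (Matrix.single i j c)ᵀ = Matrix.single j i c := by
  ext a b
  simp only [Matrix.transpose_apply, Matrix.single, Matrix.of_apply]
  simp [and_comm]

lemma corA_isSymm (p : {p : Fin m × Fin m // p.1 < p.2}) : (corA p).IsSymm := by
  unfold Matrix.IsSymm corA
  rw [transpose_add, stdBasis_transpose, stdBasis_transpose]
  exact add_comm _ _

lemma corA_diag (p : {p : Fin m × Fin m // p.1 < p.2}) (i : Fin m) : corA p i i = 0 := by
  have h := p.2
  have h1 : Matrix.single p.1.1 p.1.2 (1 : ℝ) i i = 0 :=
    Matrix.single_apply_of_ne _ _ _ _ _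
      (by rintro ⟨h1, h2⟩; rw [h1, h2] at h; exact lt_irrefl _ h)
  have h2 : Matrix.single p.1.2 p.1.1 (1 : ℝ) i i = 0 :=
    Matrix.single_apply_of_ne _ _ _ _ _
      (by rintro ⟨h1, h2⟩; rw [h1, h2] at h; exact lt_irrefl _ h)
  simp [corA, Matrix.add_apply, h1, h2]

lemma corG_isSymm (x : {p : Fin m × Fin m // p.1 < p.2} → ℝ) : (corG x).IsSymm := by
  unfold corG
  refine Matrix.IsSymm.add Matrix.isSymm_one ?_
  unfold Matrix.IsSymm
  rw [Matrix.transpose_sum]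
  refine Finset.sum_congr rfl fun p _ => ?_
  rw [transpose_smul, (corA_isSymm p)]

lemma corG_diag (x : {p : Fin m × Fin m // p.1 < p.2} → ℝ) (i : Fin m) : corG x i i = 1 := by
  simp [corG, Matrix.add_apply, Matrix.sum_apply, corA_diag, Matrix.one_apply]

/-- The submodule of symmetric matrices. -/
def symmSub (m : ℕ) : Submodule ℝ (Matrix (Fin m) (Fin m) ℝ) where
  carrier := {W | W.IsSymm}
  add_mem' ha hb := ha.add hb
  zero_mem' := Matrix.isSymm_zero
  smul_mem' c W h := h.smul c

lemma tangent_subset_symm {Y : Matrix (Fin m) (Fin m) ℝ} (hY : Y.IsSymm) :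
    tangentConeAt ℝ {A : Matrix (Fin m) (Fin m) ℝ | A.PosSemidef} Y ⊆ {W | W.IsSymm} := by
  rintro u hu
  obtain ⟨c, d, hc, hd, hlim⟩ := mem_tangentConeAt_iff_exists_seq_norm_tendsto_atTop.mp hu
  have hclosed : IsClosed ((symmSub m : Set (Matrix (Fin m) (Fin m) ℝ))) :=
    Submodule.closed_of_finiteDimensional (symmSub m)
  have : u ∈ (symmSub m : Set (Matrix (Fin m) (Fin m) ℝ)) := by
    refine hclosed.mem_of_tendsto hlim ?_
    filter_upwards [hd] with n hn
    have hdn : (d n).IsSymm := by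
      have h1 : (Y + d n).IsSymm := hn.isHermitian
      have h2 : (Y + d n - Y).IsSymm := h1.sub hY
      simpa using h2
    exact (symmSub m).smul_mem _ hdn
  exact this

lemma mem_tangent (Y : Matrix (Fin m) (Fin m) ℝ) (hY : Y.PosSemidef)
    (M : Matrix (Fin m) (Fin m) ℝ) :
    M * Y + Y * Mᵀ ∈ tangentConeAt ℝ {A : Matrix (Fin m) (Fin m) ℝ | A.PosSemidef} Y := by
  refine mem_tangentConeAt_iff_exists_seq_norm_tendsto_atTop.mpr ⟨fun n => (n : ℝ) + 1,
    fun n => (1 / ((n : ℝ) + 1)) • (M * Y + Y * Mᵀ)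
      + ((1 / ((n : ℝ) + 1)) ^ 2) • (M * Y * Mᵀ), ?_, ?_, ?_⟩
  swap
  · refine Eventually.of_forall fun n => ?_
    set t : ℝ := 1 / ((n : ℝ) + 1) with ht
    have key : Y + (t • (M * Y + Y * Mᵀ) + (t ^ 2) • (M * Y * Mᵀ))
        = (1 + t • M) * Y * (1 + t • M)ᴴ := by
      rw [Matrix.conjTranspose_eq_transpose_of_trivial, Matrix.transpose_add,
        Matrix.transpose_one, Matrix.transpose_smul]
      simp only [Matrix.add_mul, Matrix.mul_add, Matrix.one_mul, Matrix.mul_one,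
        Matrix.smul_mul, Matrix.mul_smul, smul_smul, smul_add]
      module
    show ((Y + _) ∈ {A : Matrix (Fin m) (Fin m) ℝ | A.PosSemidef})
    rw [Set.mem_setOf_eq, key]
    exact hY.mul_mul_conjTranspose_same _
  · have h1 : Tendsto (fun n : ℕ => (n : ℝ) + 1) atTop atTop :=
      tendsto_atTop_add_const_right atTop 1 tendsto_natCast_atTop_atTop
    refine h1.congr fun n => ?_
    rw [Real.norm_of_nonneg (by positivity)]
  · have hcd : ∀ n : ℕ, ((n : ℝ) + 1) • ((1 / ((n : ℝ) + 1)) • (M * Y + Y * Mᵀ)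
        + ((1 / ((n : ℝ) + 1)) ^ 2) • (M * Y * Mᵀ))
        = (M * Y + Y * Mᵀ) + (1 / ((n : ℝ) + 1)) • (M * Y * Mᵀ) := by
      intro n
      have hne : ((n : ℝ) + 1) ≠ 0 := by positivity
      rw [smul_add, smul_smul, smul_smul]
      congr 1
      · rw [mul_one_div, div_self hne, one_smul]
      · congr 1
        field_simp
    have hlim : Tendsto (fun n : ℕ => (M * Y + Y * Mᵀ)
        + (1 / ((n : ℝ) + 1)) • (M * Y * Mᵀ)) atTop (nhds (M * Y + Y * Mᵀ)) := by
      have h0 : Tendsto (fun n : ℕ => (1 / ((n : ℝ) + 1)) • (M * Y * Mᵀ)) atTop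
          (nhds (0 : Matrix (Fin m) (Fin m) ℝ)) := by
        have h := (tendsto_one_div_add_atTop_nhds_zero_nat :
          Tendsto (fun n : ℕ => 1 / ((n : ℝ) + 1)) atTop (𝓝 0)).smul_const (M * Y * Mᵀ)
        rwa [zero_smul] at h
      simpa using (tendsto_const_nhds.add h0)
    exact hlim.congr fun n => (hcd n).symm

lemma symm_zero_diag_mem_span {W : Matrix (Fin m) (Fin m) ℝ} (hW : W.IsSymm)
    (hdiag : ∀ i, W i i = 0) : W ∈ Submodule.span ℝ (Set.range (corA (m := m))) := by
  have hrep : W = ∑ p : {p : Fin m × Fin m // p.1 < p.2}, W p.1.1 p.1.2 • corA p := by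
    ext i j
    rw [Matrix.sum_apply]
    have entry : ∀ (p : {p : Fin m × Fin m // p.1 < p.2}),
        (W p.1.1 p.1.2 • corA p) i j
          = W p.1.1 p.1.2 * (Matrix.single p.1.1 p.1.2 (1:ℝ) i j
              + Matrix.single p.1.2 p.1.1 (1:ℝ) i j) := by
      intro p; simp [corA, Matrix.add_apply]
    rcases lt_trichotomy i j with h | h | h
    · rw [Fintype.sum_eq_single (⟨(i, j), h⟩ : {p : Fin m × Fin m // p.1 < p.2})
        (fun q hq => ?_)]
      · rw [entry]
        simp only
        rw [Matrix.single_apply_same, Matrix.single_apply_of_ne _ _ _ _ _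
          (by rintro ⟨h1, h2⟩; rw [h1] at h; exact lt_irrefl _ h)]
        ring
      · rw [entry]
        rw [Matrix.single_apply_of_ne _ _ _ _ _
            (by rintro ⟨h1, h2⟩; exact hq (Subtype.ext (Prod.ext h1 h2))),
          Matrix.single_apply_of_ne _ _ _ _ _
            (by rintro ⟨h1, h2⟩; have hlt := q.2; rw [h1, h2] at hlt
                exact absurd (h.trans hlt) (lt_irrefl _))]
        ring
    · subst h
      refine (Finset.sum_eq_zero fun q _ => ?_).trans (hdiag i).symm |>.symm
      rw [entry]
      rw [Matrix.single_apply_of_ne _ _ _ _ _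
          (by rintro ⟨h1, h2⟩; have hlt := q.2; rw [h1, h2] at hlt
              exact lt_irrefl _ hlt),
        Matrix.single_apply_of_ne _ _ _ _ _
          (by rintro ⟨h1, h2⟩; have hlt := q.2; rw [h1, h2] at hlt
              exact lt_irrefl _ hlt)]
      ring
    · rw [Fintype.sum_eq_single (⟨(j, i), h⟩ : {p : Fin m × Fin m // p.1 < p.2})
        (fun q hq => ?_)]
      · rw [entry]
        simp only
        rw [Matrix.single_apply_of_ne _ _ _ _ _
          (by rintro ⟨h1, h2⟩; rw [h1] at h; exact lt_irrefl _ h),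
          Matrix.single_apply_same]
        have hWji : W j i = W i j := hW.apply i j
        rw [hWji]; ring
      · rw [entry]
        rw [Matrix.single_apply_of_ne _ _ _ _ _
            (by rintro ⟨h1, h2⟩; have hlt := q.2; rw [h1, h2] at hlt
                exact absurd (h.trans hlt) (lt_irrefl _)),
          Matrix.single_apply_of_ne _ _ _ _ _
            (by rintro ⟨h1, h2⟩; exact hq (Subtype.ext (Prod.ext h2 h1)))]
        ring
  rw [hrep]
  exact Submodule.sum_mem _ fun p _ =>
    Submodule.smul_mem _ _ (Submodule.subset_span ⟨p, rfl⟩)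

end CorAux

/-- Nondegeneracy for the closest correlation matrix problem: at every feasible `x`,
`S^m = lin T_{S^m_+}(G(x)) + Im ∇G(x)`, where `Im ∇G(x)` is the span of the `A^{ij}`. -/
theorem correlation_nondegenerate {m : ℕ}
    (x : {p : Fin m × Fin m // p.1 < p.2} → ℝ) (hfeas : (corG x).PosSemidef) :
    {W : Matrix (Fin m) (Fin m) ℝ | W.IsSymm} =
      (tangentConeAt ℝ {A : Matrix (Fin m) (Fin m) ℝ | A.PosSemidef} (corG x) ∩
          {A | -A ∈ tangentConeAt ℝ {A : Matrix (Fin m) (Fin m) ℝ | A.PosSemidef} (corG x)}) +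
        (Submodule.span ℝ (Set.range (corA (m := m))) :
          Set (Matrix (Fin m) (Fin m) ℝ)) := by
  have hYsymm := CorAux.corG_isSymm x
  ext W
  constructor
  · intro hW
    have hW' : W.IsSymm := hW
    let M : Matrix (Fin m) (Fin m) ℝ := Matrix.diagonal (fun i => W i i / 2)
    have hMT : Mᵀ = M := Matrix.diagonal_transpose _
    let V : Matrix (Fin m) (Fin m) ℝ := M * corG x + corG x * Mᵀ
    have hVmem : V ∈ tangentConeAt ℝ {A : Matrix (Fin m) (Fin m) ℝ | A.PosSemidef} (corG x) :=
      CorAux.mem_tangent (corG x) hfeas M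
    have hVneg : -V ∈ tangentConeAt ℝ {A : Matrix (Fin m) (Fin m) ℝ | A.PosSemidef} (corG x) := by
      have h := CorAux.mem_tangent (corG x) hfeas (-M)
      have heq : (-M) * corG x + corG x * (-M)ᵀ = -V := by
        show (-M) * corG x + corG x * (-M)ᵀ = -(M * corG x + corG x * Mᵀ)
        rw [Matrix.transpose_neg, Matrix.neg_mul, Matrix.mul_neg, neg_add]
      rwa [heq] at h
    have hVsymm : V.IsSymm := by
      show (M * corG x + corG x * Mᵀ).IsSymm
      unfold Matrix.IsSymm
      rw [Matrix.transpose_add, Matrix.transpose_mul, Matrix.transpose_mul,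
        Matrix.transpose_transpose, hYsymm, hMT]
      exact add_comm _ _
    have hVdiag : ∀ i, V i i = W i i := by
      intro i
      show (M * corG x + corG x * Mᵀ) i i = W i i
      rw [hMT, Matrix.add_apply]
      show (Matrix.diagonal (fun i => W i i / 2) * corG x) i i
        + (corG x * Matrix.diagonal (fun i => W i i / 2)) i i = W i i
      rw [Matrix.diagonal_mul, Matrix.mul_diagonal, CorAux.corG_diag x i]
      ring
    have hspan : W - V ∈ Submodule.span ℝ (Set.range (corA (m := m))) := by
      refine CorAux.symm_zero_diag_mem_span (hW'.sub hVsymm) fun i => ?_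
      rw [Matrix.sub_apply, hVdiag i, sub_self]
    refine Set.mem_add.mpr ⟨V, ⟨hVmem, hVneg⟩, W - V, hspan, ?_⟩
    abel
  · intro hWmem
    obtain ⟨u, hu, v, hv, rfl⟩ := Set.mem_add.mp hWmem
    have husymm : u.IsSymm := CorAux.tangent_subset_symm hYsymm hu.1
    have hvsymm : v.IsSymm := by
      have hle : Submodule.span ℝ (Set.range (corA (m := m))) ≤ CorAux.symmSub m := by
        rw [Submodule.span_le]
        rintro _ ⟨p, rfl⟩
        exact CorAux.corA_isSymm p
      exact hle hv
    exact husymm.add hvsymm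
end
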